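/- One-step optimistic mirror descent inequality: let R be β-strongly convex (w.r.t. norm ‖·‖) on closed convex X with Bregman divergence B(x;y). Suppose x̃_{t+1} = argmin_{x∈X} ⟨ℓ_t, x⟩ + B(x; x̃_t)/η_t and x_t = argmin_{x∈X} ⟨ℓ̂_t, x⟩ + B(x; x̃_t)/η_t. Then for all u ∈ X: η_t ⟨ℓ_t, x_t - u⟩ ≤ B(u; x̃_t) - B(u; x̃_{t+1}) + η_t ‖ℓ_t - ℓ̂_t‖* · ‖x_t - x̃_{t+1}‖ - B(x̃_{t+1}; x_t) - B(x_t; x̃_t). -/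

import Mathlib

/-- Variational inequality at a minimizer over a segment. -/
lemma vi_aux {E : Type*} [NormedAddCommGroup E] [NormedSpace ℝ E]
    (f : E → ℝ) (L : E →L[ℝ] ℝ) (x y : E)
    (hf : HasFDerivAt f L x)
    (hmin : ∀ t ∈ Set.Ioc (0:ℝ) 1, f x ≤ f (x + t • (y - x))) :
    0 ≤ L (y - x) := by
  set g : ℝ → ℝ := fun t => f (x + t • (y - x)) with hgdef
  have hline : HasDerivAt (fun t : ℝ => x + t • (y - x)) (y - x) 0 := by
    simpa using (((hasDerivAt_id (0:ℝ)).smul_const (y - x)).const_add x)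
  have hg : HasDerivAt g (L (y - x)) 0 := by
    have hf' : HasFDerivAt f L (x + (0:ℝ) • (y - x)) := by simpa using hf
    exact hf'.comp_hasDerivAt 0 hline
  have hg' : HasDerivWithinAt g (L (y - x)) (Set.Ioi (0:ℝ)) 0 := hg.hasDerivWithinAt
  rw [hasDerivWithinAt_iff_tendsto_slope] at hg'
  have hset : Set.Ioi (0:ℝ) \ {0} = Set.Ioi (0:ℝ) := by
    apply Set.diff_singleton_eq_self; simp
  rw [hset] at hg'
  refine ge_of_tendsto hg' ?_
  filter_upwards [Ioc_mem_nhdsGT_of_mem (by simp : (0:ℝ) ∈ Set.Ico (0:ℝ) 1)] with t ht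
  have ht0 : 0 < t := ht.1
  have hle : g 0 ≤ g t := by
    have := hmin t ht
    simpa [hgdef] using this
  have : slope g 0 t = (g t - g 0) / t := by simp [slope_def_field]
  rw [this]
  exact div_nonneg (by linarith) ht0.le

/-- One-step optimistic online mirror descent inequality (Lemma: optimistic OMS). -/
theorem stmt_12 {E : Type*} [NormedAddCommGroup E] [NormedSpace ℝ E]
    (X : Set E) (hXclosed : IsClosed X) (hXconv : Convex ℝ X)
    (β : ℝ) (hβ : 0 < β)
    (R : E → ℝ) (gradR : E → (E →L[ℝ] ℝ))
    (hRderiv : ∀ x, HasFDerivAt R (gradR x) x)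
    (hRsc : ∀ x y, R y + gradR y (x - y) + (β / 2) * ‖x - y‖ ^ 2 ≤ R x)
    (B : E → E → ℝ) (hB : ∀ x y, B x y = R x - R y - gradR y (x - y))
    (η : ℝ) (hη : 0 < η)
    (ℓ ℓhat : E →L[ℝ] ℝ)
    (xt xtilde xtilde' : E)
    (hxtilde : xtilde ∈ X) (hxtilde' : xtilde' ∈ X) (hxt : xt ∈ X)
    (hmin1 : ∀ y ∈ X, ℓ xtilde' + B xtilde' xtilde / η ≤ ℓ y + B y xtilde / η)
    (hmin2 : ∀ y ∈ X, ℓhat xt + B xt xtilde / η ≤ ℓhat y + B y xtilde / η)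
    (u : E) (hu : u ∈ X) :
    η * ℓ (xt - u)
      ≤ B u xtilde - B u xtilde'
        + η * ‖ℓ - ℓhat‖ * ‖xt - xtilde'‖
        - B xtilde' xt - B xt xtilde := by
  -- derivative of x ↦ B x xtilde / η at a point p
  have hBderiv : ∀ p : E, HasFDerivAt (fun x => B x xtilde / η)
      (η⁻¹ • (gradR p - gradR xtilde)) p := by
    intro p
    have hA : HasFDerivAt (fun x => (gradR xtilde) (x - xtilde)) (gradR xtilde) p := by
      simpa [map_sub] using
        ((gradR xtilde).hasFDerivAt (x := p)).sub_const ((gradR xtilde) xtilde)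
    have h1 : HasFDerivAt (fun x => R x - R xtilde - (gradR xtilde) (x - xtilde))
        (gradR p - gradR xtilde) p := ((hRderiv p).sub_const (R xtilde)).sub hA
    have h2 := h1.const_smul η⁻¹
    have : (fun x => η⁻¹ • (R x - R xtilde - (gradR xtilde) (x - xtilde)))
        = fun x => B x xtilde / η := by
      funext x; rw [hB]; simp [smul_eq_mul]; ring
    rw [← this]
    exact h2
  -- VI at a minimizer
  have hVI : ∀ (c : E →L[ℝ] ℝ) (p : E), p ∈ X →
      (∀ y ∈ X, c p + B p xtilde / η ≤ c y + B y xtilde / η) →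
      ∀ v ∈ X, 0 ≤ c (v - p) + η⁻¹ * ((gradR p) (v - p) - (gradR xtilde) (v - p)) := by
    intro c p hp hminp v hv
    have hf : HasFDerivAt (fun x => c x + B x xtilde / η)
        (c + η⁻¹ • (gradR p - gradR xtilde)) p := (c.hasFDerivAt).add (hBderiv p)
    have h := vi_aux _ _ p v hf (by
      intro t ht
      exact hminp _ (hXconv.add_smul_sub_mem hp hv ⟨ht.1.le, ht.2⟩))
    simpa [ContinuousLinearMap.add_apply, ContinuousLinearMap.smul_apply,
      ContinuousLinearMap.sub_apply, smul_eq_mul] using h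
  have h1 := hVI ℓ xtilde' hxtilde' hmin1 u hu
  have h2 := hVI ℓhat xt hxt hmin2 xtilde' hxtilde'
  -- multiply by η
  have h1' : 0 ≤ η * (ℓ (u - xtilde')) +
      ((gradR xtilde') (u - xtilde') - (gradR xtilde) (u - xtilde')) := by
    have := mul_nonneg hη.le h1
    rw [mul_add, ← mul_assoc, mul_inv_cancel₀ hη.ne', one_mul] at this
    exact this
  have h2' : 0 ≤ η * (ℓhat (xtilde' - xt)) +
      ((gradR xt) (xtilde' - xt) - (gradR xtilde) (xtilde' - xt)) := by
    have := mul_nonneg hη.le h2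
    rw [mul_add, ← mul_assoc, mul_inv_cancel₀ hη.ne', one_mul] at this
    exact this
  have h3 : (ℓ - ℓhat) (xt - xtilde') ≤ ‖ℓ - ℓhat‖ * ‖xt - xtilde'‖ :=
    le_trans (le_abs_self _) ((ℓ - ℓhat).le_opNorm (xt - xtilde'))
  have h3' : η * ((ℓ - ℓhat) (xt - xtilde')) ≤ η * (‖ℓ - ℓhat‖ * ‖xt - xtilde'‖) :=
    mul_le_mul_of_nonneg_left h3 hη.le
  simp only [hB, map_sub, ContinuousLinearMap.sub_apply] at h1' h2' h3' ⊢
  ring_nf at h1' h2' h3' ⊢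
  linarith
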